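/- Let M = (E, ρ) be a simple binary matroid with no isthmuses whose minimum distance satisfies d ≥ 3. Then for every atom Z_a of the lattice of cyclic flats Z(M) and every coatom Z^c of Z(M), the cardinality |Z_a − Z^c| is even. -/

import Mathlib

open Finset

structure FinMatroid (α : Type*) [DecidableEq α] where
  E : Finset α
  rk : Finset α → ℕ
  rk_le_card : ∀ A, A ⊆ E → rk A ≤ A.card
  rk_mono : ∀ A B, A ⊆ B → B ⊆ E → rk A ≤ rk B
  rk_submod : ∀ A B, A ⊆ E → B ⊆ E → rk (A ∪ B) + rk (A ∩ B) ≤ rk A + rk B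

namespace FinMatroid

variable {α : Type*} [DecidableEq α]

/-- The closure operator `cl(A) = {e ∈ E : ρ(A ∪ {e}) = ρ(A)}`. -/
def cl (M : FinMatroid α) (A : Finset α) : Finset α :=
  M.E.filter fun e => M.rk (insert e A) = M.rk A

/-- The cyclic operator `cyc(A) = {e ∈ A : ρ(A − {e}) = ρ(A)}`. -/
def cyc (M : FinMatroid α) (A : Finset α) : Finset α :=
  A.filter fun e => M.rk (A.erase e) = M.rk A

/-- A flat is a set fixed by the closure operator. -/
def IsFlat (M : FinMatroid α) (F : Finset α) : Prop :=
  F ⊆ M.E ∧ M.cl F = F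

/-- A cyclic set is a set fixed by the cyclic operator. -/
def IsCyclic (M : FinMatroid α) (U : Finset α) : Prop :=
  U ⊆ M.E ∧ M.cyc U = U

/-- A cyclic flat is a set fixed by both the closure and the cyclic operators. -/
def IsCyclicFlat (M : FinMatroid α) (Z : Finset α) : Prop :=
  Z ⊆ M.E ∧ M.cl Z = Z ∧ M.cyc Z = Z

/-- The minor `M|Y/X`: restriction to `Y` followed by contraction of `X`. -/
def minor (M : FinMatroid α) (X Y : Finset α) (hXY : X ⊆ Y) (hY : Y ⊆ M.E) :
    FinMatroid α where
  E := Y \ X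
  rk A := M.rk (A ∪ X) - M.rk X
  rk_le_card := by
    intro A hA
    have hAE : A ⊆ M.E := fun a ha => hY (mem_sdiff.mp (hA ha)).1
    have hXE : X ⊆ M.E := hXY.trans hY
    have h1 := M.rk_submod A X hAE hXE
    have h2 := M.rk_le_card A hAE
    show M.rk (A ∪ X) - M.rk X ≤ A.card
    omega
  rk_mono := by
    intro A B hAB hB
    have hBE : B ⊆ M.E := fun a ha => hY (mem_sdiff.mp (hB ha)).1
    have hBX : B ∪ X ⊆ M.E := union_subset hBE (hXY.trans hY)
    have := M.rk_mono (A ∪ X) (B ∪ X) (union_subset_union hAB Subset.rfl) hBX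
    show M.rk (A ∪ X) - M.rk X ≤ M.rk (B ∪ X) - M.rk X
    omega
  rk_submod := by
    intro A B hA hB
    have hAE : A ⊆ M.E := fun a ha => hY (mem_sdiff.mp (hA ha)).1
    have hBE : B ⊆ M.E := fun a ha => hY (mem_sdiff.mp (hB ha)).1
    have hXE : X ⊆ M.E := hXY.trans hY
    have hAX : A ∪ X ⊆ M.E := union_subset hAE hXE
    have hBX : B ∪ X ⊆ M.E := union_subset hBE hXE
    have hsub := M.rk_submod (A ∪ X) (B ∪ X) hAX hBX
    have e1 : (A ∪ X) ∪ (B ∪ X) = (A ∪ B) ∪ X := by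
      ext x; simp only [mem_union]; tauto
    have e2 : (A ∪ X) ∩ (B ∪ X) = (A ∩ B) ∪ X := by
      ext x; simp only [mem_union, mem_inter]; tauto
    rw [e1, e2] at hsub
    have h1 : M.rk X ≤ M.rk (A ∪ X) := M.rk_mono X _ subset_union_right hAX
    have h2 : M.rk X ≤ M.rk (B ∪ X) := M.rk_mono X _ subset_union_right hBX
    have hIX : (A ∩ B) ∪ X ⊆ M.E := union_subset (inter_subset_left.trans hAE) hXE
    have hUX : (A ∪ B) ∪ X ⊆ M.E := union_subset (union_subset hAE hBE) hXE
    have h3 : M.rk X ≤ M.rk ((A ∩ B) ∪ X) := M.rk_mono X _ subset_union_right hIX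
    have h4 : M.rk X ≤ M.rk ((A ∪ B) ∪ X) := M.rk_mono X _ subset_union_right hUX
    show M.rk ((A ∪ B) ∪ X) - M.rk X + (M.rk ((A ∩ B) ∪ X) - M.rk X) ≤
      (M.rk (A ∪ X) - M.rk X) + (M.rk (B ∪ X) - M.rk X)
    omega

/-- The restriction `M|Y`. -/
def restrict (M : FinMatroid α) (Y : Finset α) (hY : Y ⊆ M.E) : FinMatroid α where
  E := Y
  rk := M.rk
  rk_le_card := fun A hA => M.rk_le_card A (hA.trans hY)
  rk_mono := fun A B hAB hB => M.rk_mono A B hAB (hB.trans hY)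
  rk_submod := fun A B hA hB => M.rk_submod A B (hA.trans hY) (hB.trans hY)

/-- `M` is binary: it is the matroid of linear dependence of a family of
vectors over the field with two elements. -/
def IsBinary (M : FinMatroid α) : Prop :=
  ∃ (m : ℕ) (φ : α → (Fin m → ZMod 2)),
    ∀ A : Finset α, A ⊆ M.E →
      M.rk A = Module.finrank (ZMod 2) (Submodule.span (ZMod 2) (φ '' (A : Set α)))

def Simple (M : FinMatroid α) : Prop :=
  (∀ e ∈ M.E, M.rk {e} = 1) ∧
    ∀ e ∈ M.E, ∀ f ∈ M.E, e ≠ f → M.rk ({e, f} : Finset α) = 2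

def NoIsthmus (M : FinMatroid α) : Prop :=
  ∀ e ∈ M.E, M.rk (M.E.erase e) = M.rk M.E

def IsMinDist (M : FinMatroid α) (d : ℕ) : Prop :=
  (∃ X ⊆ M.E, M.rk (M.E \ X) < M.rk M.E ∧ X.card = d) ∧
    ∀ X ⊆ M.E, M.rk (M.E \ X) < M.rk M.E → d ≤ X.card

def IsAtomCF (M : FinMatroid α) (Z : Finset α) : Prop :=
  M.IsCyclicFlat Z ∧ Z ≠ ∅ ∧ ¬ ∃ Z', M.IsCyclicFlat Z' ∧ ∅ ⊂ Z' ∧ Z' ⊂ Z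

def IsCoatomCF (M : FinMatroid α) (Z : Finset α) : Prop :=
  M.IsCyclicFlat Z ∧ Z ⊂ M.E ∧ ¬ ∃ Z', M.IsCyclicFlat Z' ∧ Z ⊂ Z' ∧ Z' ⊂ M.E

def IsCircuit (M : FinMatroid α) (C : Finset α) : Prop :=
  C ⊆ M.E ∧ M.rk C < C.card ∧ ∀ D ⊂ C, M.rk D = D.card

end FinMatroid

namespace FinMatroid

variable {α : Type*} [DecidableEq α] {M : FinMatroid α} {A B X F U Z : Finset α} {e f : α}

lemma rk_empty (M : FinMatroid α) : M.rk ∅ = 0 :=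
  Nat.le_zero.mp (by simpa using M.rk_le_card ∅ (empty_subset _))

lemma rk_union_le (hX : X ⊆ M.E) (hB : B ⊆ M.E) :
    M.rk (X ∪ B) ≤ M.rk X + B.card := by
  have h1 := M.rk_submod X B hX hB
  have h2 := M.rk_le_card B hB
  omega

lemma rk_insert_le (hX : X ⊆ M.E) (he : e ∈ M.E) :
    M.rk (insert e X) ≤ M.rk X + 1 := by
  have := rk_union_le (B := {e}) hX (by simpa using he)
  rw [insert_eq, union_comm]
  simpa using this

lemma rk_insert_absorb (hX : X ⊆ M.E) (he : e ∈ M.E) (hAX : A ⊆ X)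
    (h : M.rk (insert e A) = M.rk A) : M.rk (insert e X) = M.rk X := by
  have hAE : A ⊆ M.E := hAX.trans hX
  have hiA : insert e A ⊆ M.E := insert_subset he hAE
  have hsub := M.rk_submod (insert e A) X hiA hX
  have hu : insert e A ∪ X = insert e X := by
    ext x; simp only [mem_union, mem_insert]; tauto
  have hint : A ⊆ (insert e A) ∩ X := by
    intro a ha; exact mem_inter.mpr ⟨mem_insert_of_mem ha, hAX ha⟩
  have h1 : M.rk A ≤ M.rk ((insert e A) ∩ X) :=
    M.rk_mono _ _ hint (inter_subset_right.trans hX)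
  have h2 : M.rk X ≤ M.rk (insert e X) :=
    M.rk_mono _ _ (subset_insert _ _) (insert_subset he hX)
  rw [hu] at hsub
  omega

lemma mem_cl : e ∈ M.cl A ↔ e ∈ M.E ∧ M.rk (insert e A) = M.rk A := by
  simp [cl]

lemma cl_subset_E : M.cl A ⊆ M.E := filter_subset _ _

lemma subset_cl (hA : A ⊆ M.E) : A ⊆ M.cl A := by
  intro a ha
  exact mem_cl.mpr ⟨hA ha, by rw [insert_eq_self.mpr ha]⟩

lemma rk_union_cl_subset (hA : A ⊆ M.E) (hB : B ⊆ M.cl A) :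
    M.rk (A ∪ B) = M.rk A := by
  induction B using Finset.induction with
  | empty => simp
  | @insert f B hf ih =>
    have hfcl : f ∈ M.cl A := hB (mem_insert_self _ _)
    have hB' : B ⊆ M.cl A := (subset_insert _ _).trans hB
    have hABE : A ∪ B ⊆ M.E := union_subset hA (hB'.trans cl_subset_E)
    have := rk_insert_absorb hABE (mem_cl.mp hfcl).1 subset_union_left
      (mem_cl.mp hfcl).2
    rw [union_insert]
    rw [this, ih hB']

lemma rk_cl (hA : A ⊆ M.E) : M.rk (M.cl A) = M.rk A := by
  have h := rk_union_cl_subset hA (Subset.refl _)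
  rwa [union_eq_right.mpr (subset_cl hA)] at h

lemma cl_cl (hA : A ⊆ M.E) : M.cl (M.cl A) = M.cl A := by
  apply Subset.antisymm
  · intro e he
    obtain ⟨heE, hrk⟩ := mem_cl.mp he
    refine mem_cl.mpr ⟨heE, le_antisymm ?_ ?_⟩
    · calc M.rk (insert e A) ≤ M.rk (insert e (M.cl A)) :=
            M.rk_mono _ _ (insert_subset_insert _ (subset_cl hA))
              (insert_subset heE cl_subset_E)
        _ = M.rk (M.cl A) := hrk
        _ = M.rk A := rk_cl hA
    · exact M.rk_mono _ _ (subset_insert _ _) (insert_subset heE hA)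
  · exact subset_cl cl_subset_E

lemma cl_subset_flat (hA : A ⊆ F) (hF : F ⊆ M.E) (hflat : M.cl F = F) :
    M.cl A ⊆ F := by
  intro e he
  obtain ⟨heE, hrk⟩ := mem_cl.mp he
  have := rk_insert_absorb hF heE hA hrk
  rw [← hflat]
  exact mem_cl.mpr ⟨heE, this⟩

lemma mem_cyc : e ∈ M.cyc A ↔ e ∈ A ∧ M.rk (A.erase e) = M.rk A := by
  simp [cyc]

lemma cyc_subset : M.cyc A ⊆ A := filter_subset _ _

lemma coloop_rk (hA : A ⊆ M.E) (he : e ∈ A) (hne : M.rk (A.erase e) ≠ M.rk A) :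
    M.rk (A.erase e) + 1 = M.rk A := by
  have h1 : M.rk (A.erase e) ≤ M.rk A := M.rk_mono _ _ (erase_subset _ _) hA
  have h2 : M.rk A ≤ M.rk (A.erase e) + 1 := by
    have := rk_insert_le (X := A.erase e) ((erase_subset _ _).trans hA) (hA he)
    rwa [insert_erase he] at this
  omega

lemma cyc_erase_coloop (hA : A ⊆ M.E) (he : e ∈ A)
    (hne : M.rk (A.erase e) ≠ M.rk A) : M.cyc (A.erase e) = M.cyc A := by
  have hrk := coloop_rk hA he hne
  have hAe : A.erase e ⊆ M.E := (erase_subset _ _).trans hA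
  ext u
  simp only [mem_cyc, mem_erase]
  constructor
  · rintro ⟨⟨hue, huA⟩, hu⟩
    refine ⟨huA, ?_⟩
    by_contra hcon
    have h1 := coloop_rk hA huA hcon
    have hcomm : (A.erase u).erase e = (A.erase e).erase u := erase_right_comm
    have h2 : M.rk ((A.erase u).erase e) = M.rk (A.erase e) := by rw [hcomm, hu]
    have h3 : M.rk (insert e ((A.erase u).erase e)) = M.rk ((A.erase u).erase e) := by
      have heu : e ∈ A.erase u := mem_erase.mpr ⟨fun h => hue h.symm, he⟩
      rw [insert_erase heu]
      omega
    have h4 := rk_insert_absorb hAe (hA he) (by rw [hcomm]; exact erase_subset _ _) h3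
    rw [insert_erase he] at h4
    omega
  · rintro ⟨huA, hu⟩
    have hune : u ≠ e := by rintro rfl; exact hne hu
    refine ⟨⟨hune, huA⟩, ?_⟩
    have hcomm : (A.erase e).erase u = (A.erase u).erase e := erase_right_comm
    have h2 : M.rk (A.erase u) ≤ M.rk ((A.erase u).erase e) + 1 := by
      have heu : e ∈ A.erase u := mem_erase.mpr ⟨fun h => hune h.symm, he⟩
      have := rk_insert_le (X := (A.erase u).erase e)
        ((erase_subset _ _).trans ((erase_subset _ _).trans hA)) (hA he)
      rwa [insert_erase heu] at this
    have h4 : M.rk ((A.erase e).erase u) ≤ M.rk (A.erase e) :=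
      M.rk_mono _ _ (erase_subset _ _) hAe
    rw [hcomm]
    rw [hcomm] at h4
    omega

lemma cyc_cyc (hA : A ⊆ M.E) : M.cyc (M.cyc A) = M.cyc A := by
  generalize hn : (A \ M.cyc A).card = n
  induction n using Nat.strong_induction_on generalizing A with
  | _ n ih =>
  by_cases h : A \ M.cyc A = ∅
  · have : A = M.cyc A := Subset.antisymm (sdiff_eq_empty_iff_subset.mp h) cyc_subset
    rw [← this]
    exact this.symm
  · obtain ⟨e, he⟩ := nonempty_iff_ne_empty.mpr h
    have heA : e ∈ A := (mem_sdiff.mp he).1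
    have hec : e ∉ M.cyc A := (mem_sdiff.mp he).2
    have hne : M.rk (A.erase e) ≠ M.rk A := fun hcon => hec (mem_cyc.mpr ⟨heA, hcon⟩)
    have hrec := cyc_erase_coloop hA heA hne
    have hsd : (A.erase e) \ M.cyc (A.erase e) = (A \ M.cyc A).erase e := by
      rw [hrec]; ext x; simp only [mem_sdiff, mem_erase]; tauto
    have hcard : ((A.erase e) \ M.cyc (A.erase e)).card < n := by
      rw [hsd, ← hn]
      exact card_erase_lt_of_mem he
    have := ih _ hcard ((erase_subset e A).trans hA) rfl
    rw [hrec] at this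
    exact this

lemma rk_of_cyc_subset (hA : A ⊆ M.E) (hB : B ⊆ A) (hcyc : M.cyc A ⊆ B) :
    M.rk B + (A \ B).card = M.rk A := by
  generalize hn : (A \ B).card = n
  induction n using Nat.strong_induction_on generalizing A with
  | _ n ih =>
  by_cases h : A \ B = ∅
  · have : A = B := Subset.antisymm (sdiff_eq_empty_iff_subset.mp h) hB
    rw [this, ← hn, h]; simp
  · obtain ⟨e, he⟩ := nonempty_iff_ne_empty.mpr h
    have heA : e ∈ A := (mem_sdiff.mp he).1
    have heB : e ∉ B := (mem_sdiff.mp he).2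
    have hec : e ∉ M.cyc A := fun hx => heB (hcyc hx)
    have hne : M.rk (A.erase e) ≠ M.rk A := fun hcon => hec (mem_cyc.mpr ⟨heA, hcon⟩)
    have hrk := coloop_rk hA heA hne
    have hrec := cyc_erase_coloop hA heA hne
    have hsd : (A.erase e) \ B = (A \ B).erase e := by
      ext x; simp only [mem_sdiff, mem_erase]; tauto
    have hcard : ((A.erase e) \ B).card < n := by
      rw [hsd, ← hn]; exact card_erase_lt_of_mem he
    have hBe : B ⊆ A.erase e := fun b hb => mem_erase.mpr ⟨fun hbe => heB (hbe ▸ hb), hB hb⟩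
    have ihh := ih _ hcard ((erase_subset e A).trans hA) hBe (hrec ▸ hcyc) rfl
    rw [hsd, card_erase_of_mem he] at ihh
    have hpos : 0 < (A \ B).card := card_pos.mpr ⟨e, he⟩
    omega

lemma all_coloops_indep (hA : A ⊆ M.E) (h : M.cyc A = ∅) : M.rk A = A.card := by
  have := rk_of_cyc_subset hA (empty_subset A) (h ▸ Subset.refl _)
  simp only [sdiff_empty] at this
  rw [M.rk_empty] at this
  omega

lemma cyclic_subset_cyc (hU : M.cyc U = U) (hUX : U ⊆ X) (hX : X ⊆ M.E) :
    U ⊆ M.cyc X := by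
  intro u hu
  have huU := mem_cyc.mp (hU ▸ hu)
  refine mem_cyc.mpr ⟨hUX hu, ?_⟩
  have h1 : M.rk (insert u (U.erase u)) = M.rk (U.erase u) := by
    rw [insert_erase hu, huU.2]
  have hXe : X.erase u ⊆ M.E := (erase_subset _ _).trans hX
  have hsub : U.erase u ⊆ X.erase u := fun b hb =>
    mem_erase.mpr ⟨(mem_erase.mp hb).1, hUX (mem_erase.mp hb).2⟩
  have := rk_insert_absorb hXe (hX (hUX hu)) hsub h1
  rw [insert_erase (hUX hu)] at this
  exact this.symm

lemma cycflat_cyc_flat (hF : F ⊆ M.E) (hflat : M.cl F = F) :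
    M.IsCyclicFlat (M.cyc F) := by
  have hcE : M.cyc F ⊆ M.E := cyc_subset.trans hF
  refine ⟨hcE, ?_, cyc_cyc hF⟩
  apply Subset.antisymm
  · intro e he
    obtain ⟨heE, hrk⟩ := mem_cl.mp he
    have heF : e ∈ F := by
      rw [← hflat]
      exact mem_cl.mpr ⟨heE, rk_insert_absorb hF heE cyc_subset hrk⟩
    by_contra hec
    have hne : M.rk (F.erase e) ≠ M.rk F := fun hcon => hec (mem_cyc.mpr ⟨heF, hcon⟩)
    have hsub : M.cyc F ⊆ F.erase e := fun b hb =>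
      mem_erase.mpr ⟨fun hbe => hec (hbe ▸ hb), cyc_subset hb⟩
    have h4 := rk_insert_absorb ((erase_subset _ _).trans hF) heE hsub hrk
    rw [insert_erase heF] at h4
    exact hne h4.symm
  · exact subset_cl hcE

/-! ### Linear algebra over GF(2) -/

lemma char2_self_add {V : Type*} [AddCommGroup V] [Module (ZMod 2) V] (v : V) :
    v + v = 0 := by
  have h2 : (2 : ZMod 2) = 0 := by decide
  calc v + v = (2 : ZMod 2) • v := (two_smul _ v).symm
    _ = 0 := by rw [h2, zero_smul]

lemma gf2_four {V : Type*} [AddCommGroup V] [Module (ZMod 2) V]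
    (W : Submodule (ZMod 2) V) (v1 v2 v3 v4 : V)
    (h3 : v3 ∈ Submodule.span (ZMod 2) {v1} ⊔ (Submodule.span (ZMod 2) {v2} ⊔ W))
    (h4 : v4 ∈ Submodule.span (ZMod 2) {v1} ⊔ (Submodule.span (ZMod 2) {v2} ⊔ W))
    (h3W : v3 ∉ W) (h31 : v3 + v1 ∉ W) (h32 : v3 + v2 ∉ W)
    (h4W : v4 ∉ W) (h41 : v4 + v1 ∉ W) (h42 : v4 + v2 ∉ W)
    (h34 : v3 + v4 ∉ W) : False := by
  have key : ∀ v : V, v ∈ Submodule.span (ZMod 2) {v1} ⊔ (Submodule.span (ZMod 2) {v2} ⊔ W) →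
      v ∉ W → v + v1 ∉ W → v + v2 ∉ W → v + v1 + v2 ∈ W := by
    intro v hv hvW hv1 hv2
    obtain ⟨y, hy, z, hz, hsum⟩ := Submodule.mem_sup.mp hv
    obtain ⟨a, rfl⟩ := Submodule.mem_span_singleton.mp hy
    obtain ⟨y2, hy2, w, hw, hsum2⟩ := Submodule.mem_sup.mp hz
    obtain ⟨b, rfl⟩ := Submodule.mem_span_singleton.mp hy2
    subst hsum2
    have hab : ∀ x : ZMod 2, x = 0 ∨ x = 1 := by decide
    rcases hab a with rfl | rfl <;> rcases hab b with rfl | rfl <;>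
      simp only [zero_smul, one_smul, zero_add, add_zero] at hsum
    · exact absurd (hsum ▸ hw) hvW
    · exfalso; apply hv2
      have : v + v2 = w + (v2 + v2) := by rw [← hsum]; abel
      rw [this, char2_self_add, add_zero]; exact hw
    · exfalso; apply hv1
      have : v + v1 = w + (v1 + v1) := by rw [← hsum]; abel
      rw [this, char2_self_add, add_zero]; exact hw
    · have : v + v1 + v2 = w + (v1 + v1) + (v2 + v2) := by rw [← hsum]; abel
      rw [this, char2_self_add, char2_self_add, add_zero, add_zero]; exact hw
  have k3 := key v3 h3 h3W h31 h32
  have k4 := key v4 h4 h4W h41 h42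
  have := W.add_mem k3 k4
  have heq : (v3 + v1 + v2) + (v4 + v1 + v2) = v3 + v4 + (v1 + v1) + (v2 + v2) := by abel
  rw [heq, char2_self_add, char2_self_add, add_zero, add_zero] at this
  exact h34 this

variable {m : ℕ}

/-- The span of the image of a finset under the representation. -/
def spn (φ : α → (Fin m → ZMod 2)) (A : Finset α) : Submodule (ZMod 2) (Fin m → ZMod 2) :=
  Submodule.span (ZMod 2) (φ '' (A : Set α))

lemma spn_mono (φ : α → (Fin m → ZMod 2)) (h : A ⊆ B) : spn φ A ≤ spn φ B :=
  Submodule.span_mono (Set.image_mono  (coe_subset.mpr h))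

lemma spn_insert (φ : α → (Fin m → ZMod 2)) (e : α) (A : Finset α) :
    spn φ (insert e A) = Submodule.span (ZMod 2) {φ e} ⊔ spn φ A := by
  unfold spn
  rw [coe_insert, Set.image_insert_eq, Submodule.span_insert]

lemma mem_spn (φ : α → (Fin m → ZMod 2)) (he : e ∈ A) : φ e ∈ spn φ A :=
  Submodule.subset_span ⟨e, by simpa using he, rfl⟩

/-- `IsRep`: φ represents M. -/
def IsRep (M : FinMatroid α) (φ : α → (Fin m → ZMod 2)) : Prop :=
  ∀ A : Finset α, A ⊆ M.E → M.rk A = Module.finrank (ZMod 2) (spn φ A)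

lemma spn_eq_of_rk_eq {M : FinMatroid α} {φ : α → (Fin m → ZMod 2)} (hφ : M.IsRep φ)
    (hAB : A ⊆ B) (hB : B ⊆ M.E) (hrk : M.rk B ≤ M.rk A) : spn φ A = spn φ B := by
  refine Submodule.eq_of_le_of_finrank_le (spn_mono φ hAB) ?_
  rw [← hφ A (hAB.trans hB), ← hφ B hB]
  exact hrk

lemma mem_spn_iff_rk {M : FinMatroid α} {φ : α → (Fin m → ZMod 2)} (hφ : M.IsRep φ)
    (hiA : insert e A ⊆ M.E) : φ e ∈ spn φ A ↔ M.rk (insert e A) = M.rk A := by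
  have hA : A ⊆ M.E := (subset_insert _ _).trans hiA
  constructor
  · intro h
    have : spn φ (insert e A) = spn φ A := by
      rw [spn_insert, sup_eq_right.mpr ((Submodule.span_singleton_le_iff_mem _ _).mpr h)]
    rw [hφ _ hiA, hφ _ hA, this]
  · intro h
    have heq := spn_eq_of_rk_eq hφ (subset_insert e A) hiA (le_of_eq h)
    rw [heq]
    exact mem_spn φ (mem_insert_self _ _)


lemma rel_contra (M : FinMatroid α) (φ : α → (Fin m → ZMod 2)) (hφ : M.IsRep φ)
    (base D : Finset α) (hsub : base ∪ D ⊆ M.E)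
    (r : ℕ) (hr2 : 2 ≤ r) (hcard : r + 2 ≤ D.card)
    (HU : ∀ B ⊆ D, B.card ≤ r → M.rk (base ∪ B) = M.rk base + B.card)
    (Htop : M.rk (base ∪ D) = M.rk base + r) : False := by
  have hbE : base ⊆ M.E := subset_union_left.trans hsub
  have hDE : D ⊆ M.E := subset_union_right.trans hsub
  obtain ⟨S, hSD, hScard⟩ := exists_subset_card_eq (show r - 2 ≤ D.card by omega)
  have hbSE : base ∪ S ⊆ M.E := union_subset hbE (hSD.trans hDE)
  have h4le : 4 ≤ (D \ S).card := by rw [card_sdiff_of_subset hSD]; omega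
  obtain ⟨T, hTD, hT4⟩ := exists_subset_card_eq h4le
  obtain ⟨e1, he1T⟩ := card_pos.mp (show 0 < T.card by omega)
  have hT3 : (T.erase e1).card = 3 := by rw [card_erase_of_mem he1T]; omega
  obtain ⟨e2, e3, e4, h23, h24, h34, hTeq⟩ := card_eq_three.mp hT3
  have he2 : e2 ∈ T.erase e1 := by rw [hTeq]; simp
  have he3 : e3 ∈ T.erase e1 := by rw [hTeq]; simp
  have he4 : e4 ∈ T.erase e1 := by rw [hTeq]; simp
  have h12 : e1 ≠ e2 := fun h => (mem_erase.mp he2).1 h.symm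
  have h13 : e1 ≠ e3 := fun h => (mem_erase.mp he3).1 h.symm
  have h14 : e1 ≠ e4 := fun h => (mem_erase.mp he4).1 h.symm
  have hd1 : e1 ∈ D \ S := hTD he1T
  have hd2 : e2 ∈ D \ S := hTD (erase_subset _ _ he2)
  have hd3 : e3 ∈ D \ S := hTD (erase_subset _ _ he3)
  have hd4 : e4 ∈ D \ S := hTD (erase_subset _ _ he4)
  have hSr : M.rk (base ∪ S) = M.rk base + (r - 2) := by
    rw [HU S hSD (by omega), hScard]
  -- single-element nonmembership
  have hnm : ∀ x ∈ D \ S, φ x ∉ spn φ (base ∪ S) := by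
    intro x hx hmem
    have hxD := (mem_sdiff.mp hx).1
    have hxS := (mem_sdiff.mp hx).2
    have hins : insert x (base ∪ S) = base ∪ insert x S := by
      ext y; simp only [mem_insert, mem_union]; tauto
    have hrkeq := (mem_spn_iff_rk hφ (insert_subset (hDE hxD) hbSE)).mp hmem
    rw [hins] at hrkeq
    have h1 := HU (insert x S) (insert_subset hxD hSD)
      (by rw [card_insert_of_notMem hxS, hScard]; omega)
    rw [card_insert_of_notMem hxS, hScard] at h1
    omega
  -- pair nonmembership
  have hnm2 : ∀ x ∈ D \ S, ∀ y ∈ D \ S, x ≠ y → φ x + φ y ∉ spn φ (base ∪ S) := by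
    intro x hx y hy hxy hmem
    have hxD := (mem_sdiff.mp hx).1
    have hxS := (mem_sdiff.mp hx).2
    have hyD := (mem_sdiff.mp hy).1
    have hyS := (mem_sdiff.mp hy).2
    have hy' : φ y ∈ spn φ (base ∪ insert y S) :=
      mem_spn φ (mem_union_right _ (mem_insert_self _ _))
    have hle : spn φ (base ∪ S) ≤ spn φ (base ∪ insert y S) :=
      spn_mono φ (union_subset_union_right (subset_insert _ _))
    have hxmem : φ x ∈ spn φ (base ∪ insert y S) := by
      have hxx : φ x = (φ x + φ y) + φ y := by
        rw [add_assoc, char2_self_add, add_zero]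
      rw [hxx]
      exact Submodule.add_mem _ (hle hmem) hy'
    have hbyE : base ∪ insert y S ⊆ M.E :=
      union_subset hbE ((insert_subset hyD hSD).trans hDE)
    have hrkeq := (mem_spn_iff_rk hφ (insert_subset (hDE hxD) hbyE)).mp hxmem
    have hins : insert x (base ∪ insert y S) = base ∪ insert x (insert y S) := by
      ext z; simp only [mem_insert, mem_union]; tauto
    rw [hins] at hrkeq
    have hxyS : x ∉ insert y S := by simp only [mem_insert]; tauto
    have h1 := HU (insert x (insert y S)) (insert_subset hxD (insert_subset hyD hSD))
      (by rw [card_insert_of_notMem hxyS, card_insert_of_notMem hyS, hScard]; omega)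
    have h2 := HU (insert y S) (insert_subset hyD hSD)
      (by rw [card_insert_of_notMem hyS, hScard]; omega)
    rw [card_insert_of_notMem hxyS, card_insert_of_notMem hyS, hScard] at h1
    rw [card_insert_of_notMem hyS, hScard] at h2
    omega
  -- top equality
  have h12S : insert e1 (insert e2 S) ⊆ D :=
    insert_subset (mem_sdiff.mp hd1).1 (insert_subset (mem_sdiff.mp hd2).1 hSD)
  have hne1 : e1 ∉ insert e2 S := by
    simp only [mem_insert]
    push_neg
    exact ⟨h12, (mem_sdiff.mp hd1).2⟩
  have hc12 : (insert e1 (insert e2 S)).card = r := by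
    rw [card_insert_of_notMem hne1, card_insert_of_notMem (mem_sdiff.mp hd2).2, hScard]
    omega
  have htop2 := HU _ h12S (le_of_eq hc12)
  rw [hc12] at htop2
  have hspeq : spn φ (base ∪ insert e1 (insert e2 S)) = spn φ (base ∪ D) :=
    spn_eq_of_rk_eq hφ (union_subset_union_right h12S) hsub (by omega)
  have hiden : base ∪ insert e1 (insert e2 S) = insert e1 (insert e2 (base ∪ S)) := by
    ext z; simp only [mem_insert, mem_union]; tauto
  have hsup : spn φ (base ∪ insert e1 (insert e2 S)) =
      Submodule.span (ZMod 2) {φ e1} ⊔ (Submodule.span (ZMod 2) {φ e2} ⊔ spn φ (base ∪ S)) := by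
    rw [hiden, spn_insert, spn_insert]
  have h3mem : φ e3 ∈ Submodule.span (ZMod 2) {φ e1} ⊔
      (Submodule.span (ZMod 2) {φ e2} ⊔ spn φ (base ∪ S)) := by
    rw [← hsup, hspeq]
    exact mem_spn φ (mem_union_right _ (mem_sdiff.mp hd3).1)
  have h4mem : φ e4 ∈ Submodule.span (ZMod 2) {φ e1} ⊔
      (Submodule.span (ZMod 2) {φ e2} ⊔ spn φ (base ∪ S)) := by
    rw [← hsup, hspeq]
    exact mem_spn φ (mem_union_right _ (mem_sdiff.mp hd4).1)
  exact gf2_four (spn φ (base ∪ S)) (φ e1) (φ e2) (φ e3) (φ e4) h3mem h4mem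
    (hnm e3 hd3) (hnm2 e3 hd3 e1 hd1 (fun h => h13 h.symm))
    (hnm2 e3 hd3 e2 hd2 (fun h => h23 h.symm))
    (hnm e4 hd4) (hnm2 e4 hd4 e1 hd1 (fun h => h14 h.symm))
    (hnm2 e4 hd4 e2 hd2 (fun h => h24 h.symm))
    (hnm2 e3 hd3 e4 hd4 h34)


lemma atom_sum_zero (M : FinMatroid α) (φ : α → (Fin m → ZMod 2)) (hφ : M.IsRep φ)
    (hs : M.Simple) (hinj : ∀ x ∈ M.E, ∀ y ∈ M.E, φ x = φ y → x = y)
    (Za : Finset α) (ha : M.IsAtomCF Za) : ∑ e ∈ Za, φ e = 0 := by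
  obtain ⟨⟨hZE, hZcl, hZcyc⟩, hZne, hZmin⟩ := ha
  set r := M.rk Za with hr
  -- non-spanning subsets are independent
  have indep : ∀ B ⊆ Za, M.rk B < r → M.rk B = B.card := by
    intro B hB hlt
    by_contra hne
    have hBE : B ⊆ M.E := hB.trans hZE
    have hBlt : M.rk B < B.card := lt_of_le_of_ne (M.rk_le_card B hBE) hne
    have hUne : M.cyc B ≠ ∅ := by
      intro h
      rw [all_coloops_indep hBE h] at hBlt
      omega
    set U := M.cyc B with hU
    have hUB : U ⊆ B := cyc_subset
    have hUE : U ⊆ M.E := hUB.trans hBE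
    have hUcyc : M.cyc U = U := cyc_cyc hBE
    have hclUE : M.cl U ⊆ M.E := cl_subset_E
    have hcf := cycflat_cyc_flat hclUE (cl_cl hUE)
    have hUZ' : U ⊆ M.cyc (M.cl U) := cyclic_subset_cyc hUcyc (subset_cl hUE) hclUE
    have hclUZa : M.cl U ⊆ Za := cl_subset_flat (hUB.trans hB) hZE hZcl
    have hZ'Za : M.cyc (M.cl U) ⊆ Za := cyc_subset.trans hclUZa
    have hZ'ne : M.cyc (M.cl U) ≠ ∅ := by
      intro h
      rw [h] at hUZ'
      exact hUne (subset_empty.mp hUZ')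
    have hEq : M.cyc (M.cl U) = Za := by
      by_contra hcon
      exact hZmin ⟨M.cyc (M.cl U), hcf,
        nonempty_iff_ne_empty.mpr hZ'ne |>.empty_ssubset, ⟨hZ'Za, fun h => hcon (Subset.antisymm hZ'Za h)⟩⟩
    have h1 : M.rk (M.cyc (M.cl U)) ≤ M.rk (M.cl U) := M.rk_mono _ _ cyc_subset hclUE
    have h2 : M.rk (M.cl U) = M.rk U := rk_cl hUE
    have h3 : M.rk U ≤ M.rk B := M.rk_mono _ _ hUB hBE
    rw [hEq] at h1
    omega
  -- all subsets of size ≤ r are independent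
  have hfull : ∀ B ⊆ Za, B.card ≤ r → M.rk B = B.card := by
    intro B hB hle
    rcases lt_or_eq_of_le (M.rk_mono B Za hB hZE) with h | h
    · exact indep B hB h
    · have := M.rk_le_card B (hB.trans hZE)
      omega
  -- r ≥ 2
  obtain ⟨ez, hez⟩ := nonempty_iff_ne_empty.mpr hZne
  have hr2 : 2 ≤ r := by
    have hcard2 : 1 < Za.card := by
      by_contra h
      have h1 : Za.card = 1 := le_antisymm (by omega) (card_pos.mpr ⟨ez, hez⟩)
      obtain ⟨x, hx⟩ := card_eq_one.mp h1
      have hxZa : x ∈ Za := hx ▸ mem_singleton_self x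
      have hcyc := (mem_cyc.mp (show x ∈ M.cyc Za by rw [hZcyc]; exact hxZa)).2
      rw [hx] at hcyc
      rw [show ({x} : Finset α).erase x = ∅ from by simp, M.rk_empty] at hcyc
      have h1 := hs.1 x (hZE hxZa)
      omega
    obtain ⟨x, hx, y, hy, hxy⟩ := one_lt_card.mp hcard2
    have h2 := hs.2 x (hZE hx) y (hZE hy) hxy
    have hsub : ({x, y} : Finset α) ⊆ Za := by
      intro z hz
      rcases mem_insert.mp hz with rfl | hz
      · exact hx
      · exact (mem_singleton.mp hz) ▸ hy
    have := M.rk_mono _ _ hsub hZE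
    omega
  -- Za is dependent: card ≥ r + 1
  have hdep : r + 1 ≤ Za.card := by
    have hcyc := mem_cyc.mp (show ez ∈ M.cyc Za by rw [hZcyc]; exact hez)
    have h1 := M.rk_le_card (Za.erase ez) ((erase_subset _ _).trans hZE)
    rw [card_erase_of_mem hez] at h1
    have hpos : 0 < Za.card := card_pos.mpr ⟨ez, hez⟩
    omega
  -- card = r + 1 by rel_contra
  have hcard : Za.card = r + 1 := by
    by_contra hcon
    have hge : r + 2 ≤ Za.card := by omega
    refine rel_contra M φ hφ ∅ Za (by simpa using hZE) r hr2 hge ?_ (by rw [empty_union, M.rk_empty, zero_add])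
    intro B hB hle
    rw [empty_union, M.rk_empty, zero_add]
    exact hfull B hB hle
  -- the unique dependency has full support
  have hrerase : M.rk (Za.erase ez) = r := (mem_cyc.mp (show ez ∈ M.cyc Za by rw [hZcyc]; exact hez)).2
  have hsp : spn φ (Za.erase ez) = spn φ Za :=
    spn_eq_of_rk_eq hφ (erase_subset _ _) hZE (le_of_eq hrerase.symm)
  have hmem : φ ez ∈ spn φ (Za.erase ez) := hsp ▸ mem_spn φ hez
  have hmem' : φ ez ∈ Submodule.span (ZMod 2) (((Za.erase ez).image φ : Finset _) : Set _) := by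
    rwa [coe_image]
  obtain ⟨c, -, hc⟩ := Submodule.mem_span_finset.mp hmem'
  have hinj' : ∀ x ∈ Za.erase ez, ∀ y ∈ Za.erase ez, φ x = φ y → x = y := by
    intro x hx y hy h
    exact hinj x (hZE (erase_subset _ _ hx)) y (hZE (erase_subset _ _ hy)) h
  rw [Finset.sum_image hinj'] at hc
  set T := (Za.erase ez).filter (fun e => c (φ e) = 1) with hT
  have hsum' : ∑ e ∈ T, φ e = φ ez := by
    rw [← hc, hT, Finset.sum_filter]
    apply Finset.sum_congr rfl
    intro x hx
    have : c (φ x) = 0 ∨ c (φ x) = 1 := by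
      have : ∀ z : ZMod 2, z = 0 ∨ z = 1 := by decide
      exact this _
    rcases this with h | h <;> simp [h]
  have hTsub : T ⊆ Za.erase ez := filter_subset _ _
  have hTeq : T = Za.erase ez := by
    by_contra hcon
    have hss : T ⊂ Za.erase ez := ⟨hTsub, fun h => hcon (Subset.antisymm hTsub h)⟩
    have hTcard : T.card < r := by
      have := card_lt_card hss
      rw [card_erase_of_mem hez, hcard] at this
      omega
    have hezT : ez ∉ T := fun h => (mem_erase.mp (hTsub h)).1 rfl
    have hBsub : insert ez T ⊆ Za := insert_subset hez (hTsub.trans (erase_subset _ _))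
    have hmemT : φ ez ∈ spn φ T := by
      rw [← hsum']
      exact Submodule.sum_mem _ (fun e he => mem_spn φ he)
    have hrkT := (mem_spn_iff_rk hφ (hBsub.trans hZE)).mp hmemT
    have h1 := hfull (insert ez T) hBsub (by rw [card_insert_of_notMem hezT]; omega)
    have h2 := hfull T (hTsub.trans (erase_subset _ _)) (by omega)
    rw [card_insert_of_notMem hezT] at h1
    omega
  have hfin : φ ez + ∑ e ∈ Za.erase ez, φ e = ∑ e ∈ Za, φ e := Finset.add_sum_erase _ _ hez
  rw [← hfin, ← hTeq, hsum', char2_self_add]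



lemma coatom_pair (M : FinMatroid α) (φ : α → (Fin m → ZMod 2)) (hφ : M.IsRep φ)
    (hni : M.NoIsthmus) (d : ℕ) (hd : M.IsMinDist d) (h3 : 3 ≤ d)
    (Zc : Finset α) (hc : M.IsCoatomCF Zc) :
    ∀ e ∈ M.E \ Zc, ∀ f ∈ M.E \ Zc, φ e + φ f ∈ spn φ Zc := by
  obtain ⟨⟨hcE, hccl, hccyc⟩, hclt, hcmax⟩ := hc
  -- every proper flat above Zc adds only coloops
  have hflatstep : ∀ F : Finset α, Zc ⊆ F → F ⊆ M.E → M.cl F = F → F ≠ M.E →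
      M.rk Zc + (F \ Zc).card = M.rk F := by
    intro F hZcF hFE hFflat hFne
    have hcf := cycflat_cyc_flat hFE hFflat
    have hZcZ' : Zc ⊆ M.cyc F := cyclic_subset_cyc hccyc hZcF hFE
    have hZ'E : M.cyc F ⊂ M.E :=
      lt_of_le_of_lt (cyc_subset : M.cyc F ⊆ F) ⟨hFE, fun h => hFne (Subset.antisymm hFE h)⟩
    have hZ'eq : M.cyc F = Zc := by
      by_contra hcon
      exact hcmax ⟨M.cyc F, hcf, ⟨hZcZ', fun h => hcon (Subset.antisymm h hZcZ')⟩, hZ'E⟩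
    have := rk_of_cyc_subset hFE hZcF (le_of_eq hZ'eq)
    omega
  -- relative independence below the top
  have hrel : ∀ B ⊆ M.E \ Zc, M.rk (Zc ∪ B) < M.rk M.E →
      M.rk (Zc ∪ B) = M.rk Zc + B.card := by
    intro B hB hlt
    have hBE : B ⊆ M.E := fun b hb => (mem_sdiff.mp (hB hb)).1
    have hZB : Zc ∪ B ⊆ M.E := union_subset hcE hBE
    set F := M.cl (Zc ∪ B) with hF
    have hFE : F ⊆ M.E := cl_subset_E
    have hrkF : M.rk F = M.rk (Zc ∪ B) := rk_cl hZB
    have hFne : F ≠ M.E := by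
      intro h
      rw [h] at hrkF
      omega
    have hZcF : Zc ⊆ F := subset_union_left.trans (subset_cl hZB)
    have hstep := hflatstep F hZcF hFE (cl_cl hZB) hFne
    have hBF : B ⊆ F \ Zc := by
      intro b hb
      exact mem_sdiff.mpr ⟨(subset_cl hZB) (mem_union_right _ hb), (mem_sdiff.mp (hB hb)).2⟩
    have hcard := card_le_card hBF
    have hle := rk_union_le (M := M) hcE hBE
    omega
  -- rank of Zc is smaller than rank of E
  obtain ⟨e1', he1'⟩ := exists_of_ssubset hclt
  have hnotcl : ∀ x, x ∈ M.E → x ∉ Zc → M.rk Zc < M.rk (insert x Zc) := by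
    intro x hxE hxZc
    have hne : M.rk (insert x Zc) ≠ M.rk Zc := by
      intro h
      exact hxZc (hccl ▸ mem_cl.mpr ⟨hxE, h⟩)
    have := M.rk_mono Zc (insert x Zc) (subset_insert _ _) (insert_subset hxE hcE)
    omega
  have hrElt : M.rk Zc < M.rk M.E := by
    have h1 := hnotcl e1' he1'.1 he1'.2
    have h2 := M.rk_mono (insert e1' Zc) M.E (insert_subset he1'.1 hcE) (Subset.refl _)
    omega
  set r := M.rk M.E - M.rk Zc with hrdef
  have hrE : M.rk M.E = M.rk Zc + r := by omega
  by_cases hone : ∀ e ∈ M.E \ Zc, M.rk (insert e Zc) = M.rk M.E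
  · -- corank one: conclude
    intro e he f hf
    have heE := (mem_sdiff.mp he).1
    have hfE := (mem_sdiff.mp hf).1
    have hsp : spn φ (insert e Zc) = spn φ M.E :=
      spn_eq_of_rk_eq hφ (insert_subset heE hcE) (Subset.refl _) (le_of_eq (hone e he).symm)
    have hfmem : φ f ∈ spn φ (insert e Zc) := by rw [hsp]; exact mem_spn φ hfE
    rw [spn_insert] at hfmem
    obtain ⟨y, hy, w, hw, hsum⟩ := Submodule.mem_sup.mp hfmem
    obtain ⟨a, rfl⟩ := Submodule.mem_span_singleton.mp hy
    have hab : ∀ z : ZMod 2, z = 0 ∨ z = 1 := by decide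
    rcases hab a with rfl | rfl
    · rw [zero_smul, zero_add] at hsum
      exfalso
      have hrk := (mem_spn_iff_rk hφ (insert_subset hfE hcE)).mp (hsum ▸ hw)
      have := hnotcl f hfE (mem_sdiff.mp hf).2
      omega
    · rw [one_smul] at hsum
      have heq : φ e + φ f = w := by
        rw [← hsum, ← add_assoc, char2_self_add, zero_add]
      rw [heq]
      exact hw
  · exfalso
    push_neg at hone
    obtain ⟨e1, he1, hne1⟩ := hone
    have he1E := (mem_sdiff.mp he1).1
    have he1Zc := (mem_sdiff.mp he1).2
    have hr1 : M.rk (insert e1 Zc) = M.rk Zc + 1 := by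
      have hub := rk_insert_le (M := M) hcE he1E
      have := hnotcl e1 he1E he1Zc
      omega
    have hlt1 : M.rk (insert e1 Zc) < M.rk M.E := by
      have := M.rk_mono (insert e1 Zc) M.E (insert_subset he1E hcE) (Subset.refl _)
      omega
    have hr2 : 2 ≤ r := by omega
    set n := (M.E \ Zc).card with hn
    have hn1 : M.rk M.E ≤ M.rk Zc + (n - 1) := by
      have histh := hni e1 he1E
      have heq : M.E.erase e1 = Zc ∪ ((M.E \ Zc).erase e1) := by
        ext z
        simp only [mem_erase, mem_union, mem_sdiff]
        constructor
        · rintro ⟨hz1, hzE⟩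
          by_cases hzc : z ∈ Zc
          · exact Or.inl hzc
          · exact Or.inr ⟨hz1, hzE, hzc⟩
        · rintro (hzc | ⟨hz1, hzE, hzc⟩)
          · exact ⟨fun h => he1Zc (h ▸ hzc), hcE hzc⟩
          · exact ⟨hz1, hzE⟩
      have hle := rk_union_le (M := M) (B := (M.E \ Zc).erase e1) hcE
        ((erase_subset _ _).trans (sdiff_subset : M.E \ Zc ⊆ M.E))
      rw [heq] at histh
      rw [card_erase_of_mem he1] at hle
      omega
    have hn3 : r + 1 ≤ n := by omega
    have HU : ∀ B ⊆ M.E \ Zc, B.card ≤ r → M.rk (Zc ∪ B) = M.rk Zc + B.card := by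
      intro B hB hle
      have hBE : B ⊆ M.E := fun b hb => (mem_sdiff.mp (hB hb)).1
      rcases lt_or_eq_of_le (M.rk_mono (Zc ∪ B) M.E (union_subset hcE hBE) (Subset.refl _))
        with h | h
      · exact hrel B hB h
      · have h2 := rk_union_le (M := M) hcE hBE
        omega
    rcases eq_or_lt_of_le hn3 with hneq | hnlt
    · -- n = r + 1 : exhibit a 2-element cut, contradicting d ≥ 3
      have h1n : 1 < n := by omega
      obtain ⟨x, hx, y, hy, hxy⟩ := one_lt_card.mp h1n
      have hxE := (mem_sdiff.mp hx).1
      have hyE := (mem_sdiff.mp hy).1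
      have hxZc := (mem_sdiff.mp hx).2
      have hyZc := (mem_sdiff.mp hy).2
      set X : Finset α := insert x {y} with hX
      have hXcard : X.card = 2 := by
        rw [hX, card_insert_of_notMem (by simp [hxy]), card_singleton]
      have hXsub' : X ⊆ M.E \ Zc := by
        intro z hz
        rcases mem_insert.mp hz with rfl | hz
        · exact hx
        · exact (mem_singleton.mp hz) ▸ hy
      have hXsub : X ⊆ M.E := hXsub'.trans sdiff_subset
      have heq2 : M.E \ X = Zc ∪ ((M.E \ Zc) \ X) := by
        ext z
        simp only [mem_union, mem_sdiff]
        constructor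
        · rintro ⟨hzE, hzX⟩
          by_cases hzc : z ∈ Zc
          · exact Or.inl hzc
          · exact Or.inr ⟨⟨hzE, hzc⟩, hzX⟩
        · rintro (hzc | ⟨⟨hzE, hzc⟩, hzX⟩)
          · exact ⟨hcE hzc, fun h => (mem_sdiff.mp (hXsub' h)).2 hzc⟩
          · exact ⟨hzE, hzX⟩
      have hrkcut : M.rk (M.E \ X) < M.rk M.E := by
        rw [heq2]
        have hle := rk_union_le (M := M) hcE
          ((sdiff_subset : (M.E \ Zc) \ X ⊆ M.E \ Zc).trans sdiff_subset)
        have hcaleq : ((M.E \ Zc) \ X).card = n - 2 := by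
          rw [card_sdiff_of_subset hXsub', hXcard]
        omega
      have := hd.2 X hXsub hrkcut
      omega
    · -- n ≥ r + 2 : binary contradiction
      have htopeq : Zc ∪ (M.E \ Zc) = M.E := union_sdiff_of_subset hcE
      refine rel_contra M φ hφ Zc (M.E \ Zc) (by rw [htopeq]) r hr2 (by omega) HU ?_
      rw [htopeq, hrE]


end FinMatroid

/-- In a simple binary matroid with no isthmuses and minimum distance
`d ≥ 3`, for every atom `Za` and coatom `Zc` of the lattice of cyclic flats,
`|Za − Zc|` is even. -/
theorem atom_sdiff_coatom_even {α : Type*} [DecidableEq α] (M : FinMatroid α)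
    (hs : M.Simple) (hni : M.NoIsthmus) (hb : M.IsBinary)
    (d : ℕ) (hd : M.IsMinDist d) (h3 : 3 ≤ d)
    (Za : Finset α) (ha : M.IsAtomCF Za)
    (Zc : Finset α) (hc : M.IsCoatomCF Zc) :
    Even ((Za \ Zc).card) := by
  classical
  open FinMatroid in
  obtain ⟨m, φ, hφ0⟩ := hb
  have hφ : M.IsRep φ := fun A hA => hφ0 A hA
  have hinj : ∀ x ∈ M.E, ∀ y ∈ M.E, φ x = φ y → x = y := by
    intro x hx y hy hxy
    by_contra hne
    have h2 := hs.2 x hx y hy hne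
    have h1 := hs.1 x hx
    have hmem : φ y ∈ FinMatroid.spn φ {x} := hxy ▸ FinMatroid.mem_spn φ (mem_singleton_self x)
    have hins : insert y ({x} : Finset α) ⊆ M.E := by
      intro z hz
      rcases mem_insert.mp hz with rfl | hz
      · exact hy
      · exact (mem_singleton.mp hz) ▸ hx
    have hrk := (FinMatroid.mem_spn_iff_rk hφ hins).mp hmem
    have hpair : insert y ({x} : Finset α) = ({x, y} : Finset α) := pair_comm y x
    rw [hpair] at hrk
    omega
  have hsum := FinMatroid.atom_sum_zero M φ hφ hs hinj Za ha
  have hpair := FinMatroid.coatom_pair M φ hφ hni d hd h3 Zc hc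
  rcases Finset.eq_empty_or_nonempty (Za \ Zc) with hemp | ⟨e0, he0⟩
  · rw [hemp]
    simp
  · have hZaE : Za ⊆ M.E := ha.1.1
    have hccl : M.cl Zc = Zc := hc.1.2.1
    have hcE : Zc ⊆ M.E := hc.1.1
    have he0' : e0 ∈ M.E \ Zc :=
      mem_sdiff.mpr ⟨hZaE (mem_sdiff.mp he0).1, (mem_sdiff.mp he0).2⟩
    have hsplit := Finset.sum_sdiff (inter_subset_left : Za ∩ Zc ⊆ Za) (f := φ)
    rw [sdiff_inter_self_left] at hsplit
    have hb' : ∑ e ∈ Za ∩ Zc, φ e ∈ FinMatroid.spn φ Zc :=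
      Submodule.sum_mem _ (fun e he => FinMatroid.mem_spn φ (mem_inter.mp he).2)
    have h1 : ∑ e ∈ Za \ Zc, φ e ∈ FinMatroid.spn φ Zc := by
      have hzero : ∑ e ∈ Za \ Zc, φ e + ∑ e ∈ Za ∩ Zc, φ e = 0 := by rw [hsplit, hsum]
      have : ∑ e ∈ Za \ Zc, φ e = ∑ e ∈ Za ∩ Zc, φ e := by
        calc ∑ e ∈ Za \ Zc, φ e
            = (∑ e ∈ Za \ Zc, φ e + ∑ e ∈ Za ∩ Zc, φ e) + ∑ e ∈ Za ∩ Zc, φ e := by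
              rw [add_assoc, FinMatroid.char2_self_add, add_zero]
          _ = ∑ e ∈ Za ∩ Zc, φ e := by rw [hzero, zero_add]
      rw [this]
      exact hb'
    have h2 : ∑ e ∈ Za \ Zc, (φ e + φ e0) ∈ FinMatroid.spn φ Zc := by
      refine Submodule.sum_mem _ (fun e he => ?_)
      exact hpair e (mem_sdiff.mpr ⟨hZaE (mem_sdiff.mp he).1, (mem_sdiff.mp he).2⟩) e0 he0'
    have hdist : ∑ e ∈ Za \ Zc, (φ e + φ e0)
        = ∑ e ∈ Za \ Zc, φ e + (Za \ Zc).card • φ e0 := by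
      rw [Finset.sum_add_distrib, Finset.sum_const]
    have hsmul : (Za \ Zc).card • φ e0 ∈ FinMatroid.spn φ Zc := by
      have h4 := Submodule.add_mem _ h2 h1
      rw [hdist] at h4
      have heq : (∑ e ∈ Za \ Zc, φ e + (Za \ Zc).card • φ e0) + ∑ e ∈ Za \ Zc, φ e
          = (Za \ Zc).card • φ e0 + (∑ e ∈ Za \ Zc, φ e + ∑ e ∈ Za \ Zc, φ e) := by abel
      rw [heq, FinMatroid.char2_self_add, add_zero] at h4
      exact h4
    by_contra hodd
    obtain ⟨k, hk⟩ := Nat.not_even_iff_odd.mp hodd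
    have hsm : (Za \ Zc).card • φ e0 = φ e0 := by
      rw [hk]
      rw [add_smul, one_smul, mul_comm, mul_smul]
      have : (2 : ℕ) • φ e0 = 0 := by
        rw [two_smul, FinMatroid.char2_self_add]
      rw [this, smul_zero, zero_add]
    rw [hsm] at hsmul
    have hrk := (FinMatroid.mem_spn_iff_rk hφ (insert_subset (mem_sdiff.mp he0').1 hcE)).mp hsmul
    have : e0 ∈ Zc := by
      rw [← hccl]
      exact FinMatroid.mem_cl.mpr ⟨(mem_sdiff.mp he0').1, hrk⟩
    exact (mem_sdiff.mp he0').2 this
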